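/- Let α > 0 and let β, K, a, b be real numbers with 2b − K < 0. Then sup over u ∈ ℝ of [ inf over v ∈ ℝ of ( u·a − v·b + (α/2)·(u² − β + v)² − (K/2)·u² ) ] equals −a²/(2(2b − K)) − b²/(2α) − β·b, and the outer supremum is attained at u = a/(K − 2b). -/
import Mathlib

lemma inf_aux (α β K a b u : ℝ) (hα : 0 < α) :
    sInf (Set.range fun v : ℝ =>
        u * a - v * b + (α / 2) * (u ^ 2 - β + v) ^ 2 - (K / 2) * u ^ 2)
      = u * a + (b - K / 2) * u ^ 2 - β * b - b ^ 2 / (2 * α) := by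
  apply IsLeast.csInf_eq
  constructor
  · refine ⟨β - u ^ 2 + b / α, ?_⟩
    field_simp; ring
  · rintro x ⟨v, rfl⟩
    have h1 : (0:ℝ) ≤ (α / 2) * ((u ^ 2 - β + v) - b / α) ^ 2 := by positivity
    have h2 : α ≠ 0 := ne_of_gt hα
    have key : (α / 2) * ((u ^ 2 - β + v) - b / α) ^ 2 =
        (α / 2) * (u ^ 2 - β + v) ^ 2 - (u ^ 2 - β + v) * b + b ^ 2 / (2 * α) := by
      field_simp; ring
    nlinarith [h1, key]

/-- Pointwise computation of the polar functional `G*`: for `α > 0` and reals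
`β, K, a, b` with `2b - K < 0`, the sup over `u` of the inf over `v` of
`u*a - v*b + (α/2)*(u² - β + v)² - (K/2)*u²` equals
`-a²/(2(2b - K)) - b²/(2α) - β*b`, the outer supremum being attained at
`u = a/(K - 2b)`. -/
theorem stmt_1 (α β K a b : ℝ) (hα : 0 < α) (hb : 2 * b - K < 0) :
    IsGreatest
      (Set.range fun u : ℝ =>
        sInf (Set.range fun v : ℝ =>
          u * a - v * b + (α / 2) * (u ^ 2 - β + v) ^ 2 - (K / 2) * u ^ 2))
      (-a ^ 2 / (2 * (2 * b - K)) - b ^ 2 / (2 * α) - β * b) ∧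
    sInf (Set.range fun v : ℝ =>
        (a / (K - 2 * b)) * a - v * b
          + (α / 2) * ((a / (K - 2 * b)) ^ 2 - β + v) ^ 2
          - (K / 2) * (a / (K - 2 * b)) ^ 2)
      = -a ^ 2 / (2 * (2 * b - K)) - b ^ 2 / (2 * α) - β * b := by
  have hK : K - 2 * b ≠ 0 := by linarith
  have h2b : 2 * b - K ≠ 0 := by linarith
  have hat : sInf (Set.range fun v : ℝ =>
        (a / (K - 2 * b)) * a - v * b
          + (α / 2) * ((a / (K - 2 * b)) ^ 2 - β + v) ^ 2
          - (K / 2) * (a / (K - 2 * b)) ^ 2)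
      = -a ^ 2 / (2 * (2 * b - K)) - b ^ 2 / (2 * α) - β * b := by
    rw [inf_aux α β K a b _ hα]
    field_simp; ring
  refine ⟨⟨⟨a / (K - 2 * b), hat⟩, ?_⟩, hat⟩
  rintro x ⟨u, rfl⟩
  beta_reduce
  rw [inf_aux α β K a b u hα]
  have h1 : (0:ℝ) ≤ (u - a / (K - 2 * b)) ^ 2 := sq_nonneg _
  have h2 : (u - a / (K - 2 * b)) ^ 2 * (K - 2 * b) =
      u ^ 2 * (K - 2 * b) - 2 * u * a + a ^ 2 / (K - 2 * b) := by
    field_simp; ring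
  have h3 : a ^ 2 / (K - 2 * b) = -a ^ 2 / (2 * b - K) := by
    rw [div_eq_div_iff hK h2b]; ring
  have h4 : -a ^ 2 / (2 * (2 * b - K)) = (-a ^ 2 / (2 * b - K)) / 2 := by
    rw [div_div, mul_comm]
  nlinarith [mul_nonneg h1 (by linarith : (0:ℝ) ≤ K - 2 * b)]
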